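/- Under the same hypotheses (finite state space X, admissible actions U(x), sub-probability kernel P, bounded D, function B, weight ξ > 0 with Σ_{x'} P(x'|x,u)ξ(x') ≤ β ξ(x) for β ∈ (0,1)), the operator T[V](x) = min_{u ∈ U(x)} max{B(x), D(x,u) + Σ_{x'} P(x'|x,u)V(x')} has a unique fixed point V* : X → ℝ, and for any initial V₀ the iterates V_{k+1} = T[V_k] converge to V*. -/

import Mathlib

open Finset

lemma abs_inf'_sub_inf'_le {U : Type*} {s : Finset U} (hs : s.Nonempty)
    (f g : U → ℝ) {c : ℝ} (h : ∀ u ∈ s, |f u - g u| ≤ c) :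
    |s.inf' hs f - s.inf' hs g| ≤ c := by
  rw [abs_sub_le_iff]
  constructor
  · obtain ⟨u, hu, hgu⟩ := Finset.exists_mem_eq_inf' hs g
    have h1 : s.inf' hs f ≤ f u := Finset.inf'_le _ hu
    have h2 := (abs_le.mp (h u hu)).2
    linarith [hgu ▸ (by linarith : s.inf' hs f - g u ≤ c)]
  · obtain ⟨u, hu, hfu⟩ := Finset.exists_mem_eq_inf' hs f
    have h1 : s.inf' hs g ≤ g u := Finset.inf'_le _ hu
    have h2 := (abs_le.mp (h u hu)).1
    rw [hfu]; linarith

/-- Under the weighted-discounting hypotheses, the max-projected Bellman operator has a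
unique fixed point `V*` and value iteration converges to it from any initial `V₀`. -/
theorem bellman_operator_fixed_point
    {X U : Type*} [Fintype X] [Nonempty X] [Fintype U] [DecidableEq U]
    (Uadm : X → Finset U) (hUadm : ∀ x, (Uadm x).Nonempty)
    (P : X → U → X → ℝ) (hP : ∀ x u x', 0 ≤ P x u x')
    (D : X → U → ℝ) (B : X → ℝ)
    (ξ : X → ℝ) (hξ : ∀ x, 0 < ξ x) (β : ℝ) (hβ0 : 0 < β) (hβ1 : β < 1)
    (hdisc : ∀ x u, ∑ x', P x u x' * ξ x' ≤ β * ξ x)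
    (T : (X → ℝ) → (X → ℝ))
    (hT : ∀ V x, T V x =
      (Uadm x).inf' (hUadm x) (fun u => max (B x) (D x u + ∑ x', P x u x' * V x'))) :
    ∃! Vstar : X → ℝ, T Vstar = Vstar ∧
      ∀ V₀ : X → ℝ, ∀ x, Filter.Tendsto (fun k => T^[k] V₀ x) Filter.atTop (nhds (Vstar x)) := by
  classical
  set S : (X → ℝ) → (X → ℝ) := fun W x => T (fun y => W y * ξ y) x / ξ x with hSdef
  have hξne : ∀ x, ξ x ≠ 0 := fun x => (hξ x).ne'
  -- key Lipschitz estimate on T in the weighted norm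
  have key : ∀ W₁ W₂ : X → ℝ, ∀ x,
      |T (fun y => W₁ y * ξ y) x - T (fun y => W₂ y * ξ y) x| ≤ β * ξ x * dist W₁ W₂ := by
    intro W₁ W₂ x
    rw [hT, hT]
    apply abs_inf'_sub_inf'_le
    intro u _
    have h1 : |(D x u + ∑ x', P x u x' * (W₁ x' * ξ x')) -
        (D x u + ∑ x', P x u x' * (W₂ x' * ξ x'))| ≤ β * ξ x * dist W₁ W₂ := by
      have : (D x u + ∑ x', P x u x' * (W₁ x' * ξ x')) -
          (D x u + ∑ x', P x u x' * (W₂ x' * ξ x'))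
          = ∑ x', P x u x' * ξ x' * (W₁ x' - W₂ x') := by
        rw [add_sub_add_left_eq_sub, ← Finset.sum_sub_distrib]
        exact Finset.sum_congr rfl fun x' _ => by ring
      rw [this]
      calc |∑ x', P x u x' * ξ x' * (W₁ x' - W₂ x')|
          ≤ ∑ x', |P x u x' * ξ x' * (W₁ x' - W₂ x')| := Finset.abs_sum_le_sum_abs _ _
        _ ≤ ∑ x', P x u x' * ξ x' * dist W₁ W₂ := by
            apply Finset.sum_le_sum
            intro x' _
            rw [abs_mul, abs_of_nonneg (mul_nonneg (hP x u x') (hξ x').le)]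
            have : |W₁ x' - W₂ x'| ≤ dist W₁ W₂ := by
              rw [← Real.dist_eq]; exact dist_le_pi_dist W₁ W₂ x'
            exact mul_le_mul_of_nonneg_left this
              (mul_nonneg (hP x u x') (hξ x').le)
        _ = (∑ x', P x u x' * ξ x') * dist W₁ W₂ := by rw [Finset.sum_mul]
        _ ≤ β * ξ x * dist W₁ W₂ := by
            exact mul_le_mul_of_nonneg_right (hdisc x u) dist_nonneg
    calc |max (B x) (D x u + ∑ x', P x u x' * (W₁ x' * ξ x')) -
          max (B x) (D x u + ∑ x', P x u x' * (W₂ x' * ξ x'))|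
        ≤ |(D x u + ∑ x', P x u x' * (W₁ x' * ξ x')) -
            (D x u + ∑ x', P x u x' * (W₂ x' * ξ x'))| := by
          rw [max_comm (B x), max_comm (B x)]
          exact abs_max_sub_max_le_abs _ _ _
      _ ≤ β * ξ x * dist W₁ W₂ := h1
  have hC : ContractingWith ⟨β, hβ0.le⟩ S := by
    constructor
    · exact_mod_cast hβ1
    · refine LipschitzWith.of_dist_le_mul ?_
      intro W₁ W₂
      show dist (S W₁) (S W₂) ≤ β * dist W₁ W₂
      rw [dist_pi_le_iff (mul_nonneg hβ0.le dist_nonneg)]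
      intro x
      rw [Real.dist_eq, hSdef]
      simp only
      rw [div_sub_div_same, abs_div, abs_of_pos (hξ x), div_le_iff₀ (hξ x)]
      calc |T (fun y => W₁ y * ξ y) x - T (fun y => W₂ y * ξ y) x|
          ≤ β * ξ x * dist W₁ W₂ := key W₁ W₂ x
        _ = β * dist W₁ W₂ * ξ x := by ring
  set Wstar := hC.fixedPoint with hWs
  have hWfix : S Wstar = Wstar := hC.fixedPoint_isFixedPt
  set Vstar : X → ℝ := fun x => Wstar x * ξ x with hVdef
  -- iterates of T correspond to iterates of S
  have hiter : ∀ (V₀ : X → ℝ) (k : ℕ),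
      T^[k] V₀ = fun x => S^[k] (fun y => V₀ y / ξ y) x * ξ x := by
    intro V₀ k
    induction k with
    | zero => funext x; simp [div_mul_cancel₀ _ (hξne x)]
    | succ k ih =>
      rw [Function.iterate_succ_apply', Function.iterate_succ_apply', ih]
      funext x
      rw [hSdef]
      simp only
      rw [div_mul_cancel₀ _ (hξne x)]
  -- T Vstar = Vstar
  have hTfix : T Vstar = Vstar := by
    funext x
    have := congrFun hWfix x
    rw [hSdef] at this
    simp only at this
    have h2 : (fun y => Wstar y * ξ y) = Vstar := rfl
    rw [h2] at this
    have := congrArg (· * ξ x) this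
    simp only [div_mul_cancel₀ _ (hξne x)] at this
    exact this
  -- fixed points of T give fixed points of S
  have hSfix_of : ∀ V : X → ℝ, T V = V → Function.IsFixedPt S (fun y => V y / ξ y) := by
    intro V hV
    funext x
    rw [hSdef]
    simp only
    have : (fun y => V y / ξ y * ξ y) = V := by
      funext y; rw [div_mul_cancel₀ _ (hξne y)]
    rw [this, hV]
  refine ⟨Vstar, ⟨hTfix, ?_⟩, ?_⟩
  · intro V₀ x
    have htend := hC.tendsto_iterate_fixedPoint (fun y => V₀ y / ξ y)
    have htx : Filter.Tendsto (fun k => S^[k] (fun y => V₀ y / ξ y) x)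
        Filter.atTop (nhds (Wstar x)) :=
      ((continuous_apply x).continuousAt.tendsto).comp htend
    have h := htx.mul_const (ξ x)
    simp only [hiter V₀]
    exact h
  · rintro V' ⟨hV'fix, -⟩
    have h1 : (fun y => V' y / ξ y) = Wstar :=
      hC.fixedPoint_unique (hSfix_of V' hV'fix)
    funext x
    have h2 := congrFun h1 x
    show V' x = Wstar x * ξ x
    rw [← h2, div_mul_cancel₀ _ (hξne x)]
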